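/- Let P1 and P2 be non-empty finite posets such that P1 has no greatest element and P2 has no least element. Then sat*(n, P2 * P1) ≥ max{ sat*(n, P2 * •), sat*(n, • * P1) }, where • denotes the one-element poset. -/

import Mathlib

open Finset Filter

/-- An induced copy of the poset `α` inside the family `𝒜` of subsets of `Fin n`
(representing `[n] = {1,…,n}`): an injective map `f : α → Finset (Fin n)` with image
contained in `𝒜` such that `a ≤ b ↔ f a ⊆ f b`. -/
def IsInducedCopy {α : Type*} [PartialOrder α] {n : ℕ}
    (𝒜 : Finset (Finset (Fin n))) (f : α → Finset (Fin n)) : Prop :=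
  Function.Injective f ∧ (∀ a, f a ∈ 𝒜) ∧ ∀ a b : α, a ≤ b ↔ f a ⊆ f b

/-- The family `𝒜` contains an induced copy of the poset `α`. -/
def ContainsCopy (α : Type*) [PartialOrder α] {n : ℕ}
    (𝒜 : Finset (Finset (Fin n))) : Prop :=
  ∃ f : α → Finset (Fin n), IsInducedCopy 𝒜 f

/-- `𝒜` is an `α`-saturated family: it contains no induced copy of `α`, but adding any
set not in `𝒜` creates an induced copy of `α`. -/
def IsSaturatedFamily (α : Type*) [PartialOrder α] {n : ℕ}
    (𝒜 : Finset (Finset (Fin n))) : Prop :=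
  ¬ ContainsCopy α 𝒜 ∧
    ∀ S : Finset (Fin n), S ∉ 𝒜 → ContainsCopy α (insert S 𝒜)

/-- The induced saturation number `sat*(n, α)`: the minimum size of an `α`-saturated
family of subsets of `[n]`. -/
noncomputable def satStar (α : Type*) [PartialOrder α] (n : ℕ) : ℕ :=
  sInf {k : ℕ | ∃ 𝒜 : Finset (Finset (Fin n)), IsSaturatedFamily α 𝒜 ∧ 𝒜.card = k}

namespace Statement3Aux

variable {n : ℕ}

/-! ### Transport of copies along order isomorphisms and duality -/

theorem containsCopy_of_orderIso {α β : Type*} [PartialOrder α] [PartialOrder β]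
    (e : α ≃o β) {𝒜 : Finset (Finset (Fin n))} (hc : ContainsCopy β 𝒜) :
    ContainsCopy α 𝒜 := by
  obtain ⟨f, finj, fmem, fiff⟩ := hc
  exact ⟨fun a => f (e a), fun a b hab => e.injective (finj hab), fun a => fmem _,
    fun a b => e.le_iff_le.symm.trans (fiff (e a) (e b))⟩

theorem isSaturatedFamily_congr {α β : Type*} [PartialOrder α] [PartialOrder β]
    (e : α ≃o β) {𝒜 : Finset (Finset (Fin n))} (h : IsSaturatedFamily β 𝒜) :
    IsSaturatedFamily α 𝒜 := by
  refine ⟨fun hc => h.1 (containsCopy_of_orderIso e.symm hc), fun S hS => ?_⟩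
  exact containsCopy_of_orderIso e (h.2 S hS)

theorem satStar_congr {α β : Type*} [PartialOrder α] [PartialOrder β]
    (e : α ≃o β) (n : ℕ) : satStar α n = satStar β n := by
  unfold satStar
  congr 1
  ext k
  exact ⟨fun ⟨𝒜, h, hk⟩ => ⟨𝒜, isSaturatedFamily_congr e.symm h, hk⟩,
    fun ⟨𝒜, h, hk⟩ => ⟨𝒜, isSaturatedFamily_congr e h, hk⟩⟩

theorem containsCopy_dual_image_compl {α : Type*} [PartialOrder α]
    {𝒜 : Finset (Finset (Fin n))} (hc : ContainsCopy α 𝒜) :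
    ContainsCopy αᵒᵈ (𝒜.image compl) := by
  obtain ⟨f, finj, fmem, fiff⟩ := hc
  refine ⟨fun x => (f (OrderDual.ofDual x))ᶜ, ?_, ?_, ?_⟩
  · intro a b hab
    exact finj (compl_injective hab)
  · intro a
    exact Finset.mem_image_of_mem _ (fmem _)
  · intro a b
    exact (fiff (OrderDual.ofDual b) (OrderDual.ofDual a)).trans
      Finset.compl_subset_compl.symm

theorem containsCopy_of_dual_image_compl {α : Type*} [PartialOrder α]
    {𝒜 : Finset (Finset (Fin n))} (hc : ContainsCopy αᵒᵈ (𝒜.image compl)) :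
    ContainsCopy α 𝒜 := by
  obtain ⟨f, finj, fmem, fiff⟩ := hc
  refine ⟨fun a => (f (OrderDual.toDual a))ᶜ, ?_, ?_, ?_⟩
  · intro a b hab
    exact finj (compl_injective hab)
  · intro a
    obtain ⟨b, hb, hb2⟩ := Finset.mem_image.1 (fmem (OrderDual.toDual a))
    show (f (OrderDual.toDual a))ᶜ ∈ 𝒜
    rw [← hb2, compl_compl]
    exact hb
  · intro a b
    exact (fiff (OrderDual.toDual b) (OrderDual.toDual a)).trans
      Finset.compl_subset_compl.symm

theorem compl_image_compl_image (𝒜 : Finset (Finset (Fin n))) :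
    (𝒜.image compl).image compl = 𝒜 := by
  rw [Finset.image_image]
  simp [Function.comp_def]

theorem isSaturatedFamily_dual {α : Type*} [PartialOrder α]
    {𝒜 : Finset (Finset (Fin n))} (h : IsSaturatedFamily α 𝒜) :
    IsSaturatedFamily αᵒᵈ (𝒜.image compl) := by
  constructor
  · intro hc
    exact h.1 (containsCopy_of_dual_image_compl hc)
  · intro S hS
    have hSc : Sᶜ ∉ 𝒜 := by
      intro h'
      exact hS (by rw [← compl_compl S]; exact Finset.mem_image_of_mem _ h')
    have hc := containsCopy_dual_image_compl (h.2 Sᶜ hSc)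
    rwa [Finset.image_insert, compl_compl] at hc

theorem isSaturatedFamily_of_dual {α : Type*} [PartialOrder α]
    {𝒜 : Finset (Finset (Fin n))} (h : IsSaturatedFamily αᵒᵈ 𝒜) :
    IsSaturatedFamily α (𝒜.image compl) := by
  constructor
  · intro hc
    have := containsCopy_dual_image_compl hc
    rw [compl_image_compl_image] at this
    exact h.1 this
  · intro S hS
    have hSc : Sᶜ ∉ 𝒜 := by
      intro h'
      exact hS (by rw [← compl_compl S]; exact Finset.mem_image_of_mem _ h')
    have hc := h.2 Sᶜ hSc
    apply containsCopy_of_dual_image_compl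
    rwa [Finset.image_insert, compl_image_compl_image]

theorem satStar_dual (α : Type*) [PartialOrder α] (n : ℕ) :
    satStar α n = satStar αᵒᵈ n := by
  unfold satStar
  congr 1
  ext k
  constructor
  · rintro ⟨𝒜, h, hk⟩
    exact ⟨𝒜.image compl, isSaturatedFamily_dual h,
      by rw [Finset.card_image_of_injective _ compl_injective, hk]⟩
  · rintro ⟨𝒜, h, hk⟩
    exact ⟨𝒜.image compl, isSaturatedFamily_of_dual h,
      by rw [Finset.card_image_of_injective _ compl_injective, hk]⟩

/-! ### Existence of saturated families -/

theorem exists_saturatedFamily (α : Type*) [PartialOrder α] [Nonempty α] (n : ℕ) :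
    ∃ 𝒜 : Finset (Finset (Fin n)), IsSaturatedFamily α 𝒜 := by
  classical
  have hfree : ¬ ContainsCopy α (∅ : Finset (Finset (Fin n))) := by
    rintro ⟨f, -, hmem, -⟩
    simpa using hmem (Classical.arbitrary α)
  obtain ⟨𝒜, h𝒜, hmax⟩ := Finset.exists_max_image
      ((Finset.univ : Finset (Finset (Finset (Fin n)))).filter fun 𝒜 => ¬ ContainsCopy α 𝒜)
      Finset.card ⟨∅, by simp [hfree]⟩
  refine ⟨𝒜, (Finset.mem_filter.1 h𝒜).2, ?_⟩
  intro S hS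
  by_contra hc
  have hmem : insert S 𝒜 ∈
      (Finset.univ : Finset (Finset (Finset (Fin n)))).filter fun 𝒜 => ¬ ContainsCopy α 𝒜 :=
    Finset.mem_filter.2 ⟨Finset.mem_univ _, hc⟩
  have := hmax _ hmem
  rw [Finset.card_insert_of_notMem hS] at this
  omega

/-! ### The core construction -/

section Core

variable {P1 P2 : Type*} [PartialOrder P1] [Fintype P1] [Nonempty P1]
  [PartialOrder P2] [Fintype P2] [Nonempty P2]

/-- `A` lies strictly below an induced copy of `P2` inside `F`. -/
def HasCopyAbove (P2 : Type*) [PartialOrder P2] {n : ℕ} (F : Finset (Finset (Fin n)))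
    (A : Finset (Fin n)) : Prop :=
  ∃ g : P2 → Finset (Fin n), IsInducedCopy F g ∧ ∀ p, A ⊂ g p

/-- The subfamily of `F` of sets having no induced copy of `P2` strictly above them. -/
noncomputable def goodFam (P2 : Type*) [PartialOrder P2] {n : ℕ}
    (F : Finset (Finset (Fin n))) : Finset (Finset (Fin n)) :=
  @Finset.filter _ (fun A : Finset (Fin n) => ¬ HasCopyAbove P2 F A)
    (Classical.decPred _) F

theorem mem_goodFam {F : Finset (Finset (Fin n))} {A : Finset (Fin n)} :
    A ∈ goodFam P2 F ↔ A ∈ F ∧ ¬ HasCopyAbove P2 F A :=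
  @Finset.mem_filter _ _ (Classical.decPred _) F A

theorem goodFam_subset (F : Finset (Finset (Fin n))) : goodFam P2 F ⊆ F :=
  fun A hA => (mem_goodFam.1 hA).1

/-- In a lex sum, `inl` and `inr` elements are distinct. -/
theorem lex_inl_ne_inr {α β : Type*} (a : α) (b : β) :
    (toLex (Sum.inl a) : α ⊕ₗ β) ≠ toLex (Sum.inr b) :=
  fun h => Sum.inl_ne_inr (toLex.injective h)

/-- Combining an induced copy of `P1` with an induced copy of `P2` lying strictly above it
gives an induced copy of `P1 ⊕ₗ P2`. -/
theorem combine_copies {F : Finset (Finset (Fin n))} {h : P1 → Finset (Fin n)}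
    {g : P2 → Finset (Fin n)} (hh : IsInducedCopy F h) (hg : IsInducedCopy F g)
    (hlt : ∀ q p, h q ⊂ g p) : ContainsCopy (P1 ⊕ₗ P2) F := by
  refine ⟨fun x => Sum.elim h g (ofLex x), ?_, ?_, ?_⟩
  · rintro (a | a) (b | b) hab <;> simp only [Sum.elim_inl, Sum.elim_inr] at hab
    · rw [hh.1 hab]
    · exact absurd hab (hlt a b).ne
    · exact absurd hab (hlt b a).ne'
    · rw [hg.1 hab]
  · rintro (a | a)
    · exact hh.2.1 a
    · exact hg.2.1 a
  · rintro (a | a) (b | b) <;> simp only [Sum.elim_inl, Sum.elim_inr]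
    · exact (Sum.Lex.inl_le_inl_iff).trans (hh.2.2 a b)
    · exact iff_of_true (Sum.Lex.inl_le_inr a b) (hlt a b).subset
    · exact iff_of_false Sum.Lex.not_inr_le_inl fun hc => (hlt b a).not_subset hc
    · exact (Sum.Lex.inr_le_inr_iff).trans (hg.2.2 a b)

/-- Builder of copies of `U ⊕ₗ P2` for a subsingleton `U`: a bottom set `B` together with a
copy of `P2` strictly above it. -/
theorem unit_copy_builder {U : Type*} [PartialOrder U] [Subsingleton U] [Nonempty U]
    {𝒜 : Finset (Finset (Fin n))} {B : Finset (Fin n)} {g : P2 → Finset (Fin n)}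
    (hB : B ∈ 𝒜) (hginj : Function.Injective g) (hgmem : ∀ p, g p ∈ 𝒜)
    (hgiff : ∀ p p', p ≤ p' ↔ g p ⊆ g p') (hlt : ∀ p, B ⊂ g p) :
    ContainsCopy (U ⊕ₗ P2) 𝒜 := by
  refine ⟨fun x => Sum.elim (fun _ => B) g (ofLex x), ?_, ?_, ?_⟩
  · rintro (a | a) (b | b) hab <;> simp only [Sum.elim_inl, Sum.elim_inr] at hab
    · rw [Subsingleton.elim a b]
    · exact absurd hab (hlt b).ne
    · exact absurd hab (hlt a).ne'
    · rw [hginj hab]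
  · rintro (a | a)
    · exact hB
    · exact hgmem a
  · rintro (a | a) (b | b) <;> simp only [Sum.elim_inl, Sum.elim_inr]
    · refine iff_of_true ?_ subset_rfl
      rw [Subsingleton.elim a b]
      exact le_rfl
    · exact iff_of_true (Sum.Lex.inl_le_inr a b) (hlt b).subset
    · exact iff_of_false Sum.Lex.not_inr_le_inl fun hc => (hlt a).not_subset hc
    · exact (Sum.Lex.inr_le_inr_iff).trans (hgiff a b)

/-- If a copy is created by adding `S` to a copy-free family, the copy must use `S`. -/
theorem copy_through {α : Type*} [PartialOrder α] {F : Finset (Finset (Fin n))}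
    {S : Finset (Fin n)} (hfree : ¬ ContainsCopy α F)
    (hc : ContainsCopy α (insert S F)) :
    ∃ f : α → Finset (Fin n), IsInducedCopy (insert S F) f ∧ ∃ x, f x = S := by
  obtain ⟨f, hf⟩ := hc
  refine ⟨f, hf, ?_⟩
  by_contra hno
  push_neg at hno
  exact hfree ⟨f, hf.1, fun a => (Finset.mem_insert.1 (hf.2.1 a)).resolve_left (hno a), hf.2.2⟩

variable (h2 : ∀ m : P2, ¬ IsBot m)

include h2 in
/-- If some copy of `P2` in `F` lies strictly above `A`, then one can find such a copy all of
whose members are in `goodFam P2 F`. (Choose a copy maximizing the size of the intersection;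
since `P2` has no bottom element, replacing the copy by one lying above one of its members
strictly increases this measure.) -/
theorem exists_copy_above_good {F : Finset (Finset (Fin n))} {A : Finset (Fin n)}
    (hA : HasCopyAbove P2 F A) :
    ∃ g : P2 → Finset (Fin n), IsInducedCopy (goodFam P2 F) g ∧ ∀ p, A ⊂ g p := by
  suffices H : ∀ (k : ℕ) (g : P2 → Finset (Fin n)), IsInducedCopy F g → (∀ p, A ⊂ g p) →
      n ≤ (Finset.univ.inf g).card + k →
      ∃ g' : P2 → Finset (Fin n), IsInducedCopy (goodFam P2 F) g' ∧ ∀ p, A ⊂ g' p by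
    obtain ⟨g, hg, hab⟩ := hA
    exact H n g hg hab (Nat.le_add_left n _)
  intro k
  induction k with
  | zero =>
    intro g hg hab hn
    by_cases hall : ∀ p, ¬ HasCopyAbove P2 F (g p)
    · exact ⟨g, ⟨hg.1, fun p => mem_goodFam.2 ⟨hg.2.1 p, hall p⟩, hg.2.2⟩, hab⟩
    · push_neg at hall
      obtain ⟨p₀, g', hg', hab'⟩ := hall
      obtain ⟨p₁, hp₁⟩ : ∃ p₁, ¬ p₀ ≤ p₁ := not_forall.1 (h2 p₀)
      have h1 : Finset.univ.inf g ⊂ g p₀ := by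
        refine Finset.ssubset_iff_subset_ne.2 ⟨Finset.inf_le (Finset.mem_univ p₀), ?_⟩
        intro heq
        exact hp₁ ((hg.2.2 p₀ p₁).2 (heq ▸ Finset.inf_le (Finset.mem_univ p₁)))
      have h2' : g p₀ ⊆ Finset.univ.inf g' :=
        Finset.le_inf fun p _ => (hab' p).subset
      have hcard : (Finset.univ.inf g).card < (Finset.univ.inf g').card :=
        lt_of_lt_of_le (Finset.card_lt_card h1) (Finset.card_le_card h2')
      have hbound : (Finset.univ.inf g' : Finset (Fin n)).card ≤ n := by
        have := Finset.card_le_univ (Finset.univ.inf g')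
        simpa using this
      omega
  | succ k ih =>
    intro g hg hab hn
    by_cases hall : ∀ p, ¬ HasCopyAbove P2 F (g p)
    · exact ⟨g, ⟨hg.1, fun p => mem_goodFam.2 ⟨hg.2.1 p, hall p⟩, hg.2.2⟩, hab⟩
    · push_neg at hall
      obtain ⟨p₀, g', hg', hab'⟩ := hall
      obtain ⟨p₁, hp₁⟩ : ∃ p₁, ¬ p₀ ≤ p₁ := not_forall.1 (h2 p₀)
      have h1 : Finset.univ.inf g ⊂ g p₀ := by
        refine Finset.ssubset_iff_subset_ne.2 ⟨Finset.inf_le (Finset.mem_univ p₀), ?_⟩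
        intro heq
        exact hp₁ ((hg.2.2 p₀ p₁).2 (heq ▸ Finset.inf_le (Finset.mem_univ p₁)))
      have h2' : g p₀ ⊆ Finset.univ.inf g' :=
        Finset.le_inf fun p _ => (hab' p).subset
      have hcard : (Finset.univ.inf g).card < (Finset.univ.inf g').card :=
        lt_of_lt_of_le (Finset.card_lt_card h1) (Finset.card_le_card h2')
      exact ih g' hg' (fun p => (hab p₀).trans (hab' p)) (by omega)

include h2 in
/-- If there is a copy of `P1` in `F` lying (weakly) below `T`, then there is a member of
`goodFam P2 F` contained in `T`. -/
theorem exists_good_below {F : Finset (Finset (Fin n))}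
    (hfree : ¬ ContainsCopy (P1 ⊕ₗ P2) F)
    (hsat : ∀ S : Finset (Fin n), S ∉ F → ContainsCopy (P1 ⊕ₗ P2) (insert S F))
    (T : Finset (Fin n)) (hT : ∃ h : P1 → Finset (Fin n), IsInducedCopy F h ∧ ∀ q, h q ⊆ T) :
    ∃ B ∈ goodFam P2 F, B ⊆ T := by
  induction T using Finset.strongInduction with
  | _ T ih =>
    obtain ⟨h, hh, hht⟩ := hT
    by_cases hTF : T ∈ F
    · refine ⟨T, mem_goodFam.2 ⟨hTF, ?_⟩, subset_rfl⟩
      rintro ⟨g, hg, habove⟩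
      exact hfree (combine_copies hh hg fun q p =>
        lt_of_le_of_lt (Finset.le_iff_subset.2 (hht q)) (habove p))
    · obtain ⟨f, hf, x, hx⟩ := copy_through hfree (hsat T hTF)
      have hfmem : ∀ z : P1 ⊕ₗ P2, z ≠ x → f z ∈ F := by
        intro z hz
        refine (Finset.mem_insert.1 (hf.2.1 z)).resolve_left ?_
        intro hzT
        exact hz (hf.1 (hzT.trans hx.symm))
      rcases x with q₀ | y
      · -- `T` was inserted in the bottom part: contradiction with freeness of `F`
        exfalso
        have hgmem : ∀ p, f (toLex (Sum.inr p)) ∈ F := fun p =>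
          hfmem _ (lex_inl_ne_inr q₀ p).symm
        refine hfree (combine_copies hh
          (⟨fun p p' hpp => Sum.inr_injective (toLex.injective (hf.1 hpp)),
            hgmem, fun p p' => (Sum.Lex.inr_le_inr_iff).symm.trans (hf.2.2 _ _)⟩ :
            IsInducedCopy F fun p => f (toLex (Sum.inr p))) ?_)
        intro q p
        refine lt_of_le_of_lt (Finset.le_iff_subset.2 (hht q)) ?_
        refine Finset.ssubset_iff_subset_ne.2 ⟨?_, ?_⟩
        · rw [← hx]
          exact (hf.2.2 _ _).1 (Sum.Lex.inl_le_inr q₀ p)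
        · rw [← hx]
          intro heq
          exact absurd (hf.1 heq) (lex_inl_ne_inr q₀ p)
      · -- `T` was inserted in the top part: recurse on the intersection of the top part
        have hTy : f (toLex (Sum.inr y)) = T := hx
        have hsub : Finset.univ.inf (fun p => f (toLex (Sum.inr p))) ⊆ T := by
          have h' : Finset.univ.inf (fun p => f (toLex (Sum.inr p))) ≤
              f (toLex (Sum.inr y)) := Finset.inf_le (Finset.mem_univ y)
          rwa [hTy] at h'
        obtain ⟨p₁, hp₁⟩ : ∃ p₁, ¬ y ≤ p₁ := not_forall.1 (h2 y)
        have hne : Finset.univ.inf (fun p => f (toLex (Sum.inr p))) ≠ T := by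
          intro heq
          apply hp₁
          rw [← Sum.Lex.inr_le_inr_iff (α := P1)]
          refine (hf.2.2 _ _).2 ?_
          have h' : Finset.univ.inf (fun p => f (toLex (Sum.inr p))) ≤
              f (toLex (Sum.inr p₁)) := Finset.inf_le (Finset.mem_univ p₁)
          rw [heq, ← hTy] at h'
          exact h'
        have hss : Finset.univ.inf (fun p => f (toLex (Sum.inr p))) ⊂ T :=
          Finset.ssubset_iff_subset_ne.2 ⟨hsub, hne⟩
        have hcopy : IsInducedCopy F fun q => f (toLex (Sum.inl q)) := by
          refine ⟨fun q q' hqq => Sum.inl_injective (toLex.injective (hf.1 hqq)), ?_,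
            fun q q' => (Sum.Lex.inl_le_inl_iff).symm.trans (hf.2.2 _ _)⟩
          intro q
          exact hfmem _ (lex_inl_ne_inr q y)
        have hbelow : ∀ q, f (toLex (Sum.inl q)) ⊆
            Finset.univ.inf (fun p => f (toLex (Sum.inr p))) :=
          fun q => Finset.le_inf fun p _ => (hf.2.2 _ _).1 (Sum.Lex.inl_le_inr q p)
        obtain ⟨B, hB, hBT'⟩ := ih _ hss ⟨_, hcopy, hbelow⟩
        exact ⟨B, hB, hBT'.trans hsub⟩

include h2 in
theorem goodFam_saturated {F : Finset (Finset (Fin n))}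
    (hfree : ¬ ContainsCopy (P1 ⊕ₗ P2) F)
    (hsat : ∀ S : Finset (Fin n), S ∉ F → ContainsCopy (P1 ⊕ₗ P2) (insert S F))
    (U : Type*) [PartialOrder U] [Subsingleton U] [Nonempty U] :
    IsSaturatedFamily (U ⊕ₗ P2) (goodFam P2 F) := by
  have hG := goodFam_subset (P2 := P2) F
  -- a common builder: if `S` has a copy of `P2` above it in `F`, we are done
  have key : ∀ S : Finset (Fin n), HasCopyAbove P2 F S →
      ContainsCopy (U ⊕ₗ P2) (insert S (goodFam P2 F)) := by
    intro S hS
    obtain ⟨g, hg, hab⟩ := exists_copy_above_good h2 hS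
    exact unit_copy_builder (Finset.mem_insert_self _ _) hg.1
      (fun p => Finset.mem_insert_of_mem (hg.2.1 p)) hg.2.2 hab
  constructor
  · -- freeness
    rintro ⟨f, finj, fmem, fiff⟩
    set B := f (toLex (Sum.inl (Classical.arbitrary U))) with hB
    have hBG : B ∈ goodFam P2 F := fmem _
    apply (mem_goodFam.1 hBG).2
    refine ⟨fun p => f (toLex (Sum.inr p)), ⟨?_, ?_, ?_⟩, ?_⟩
    · intro p p' hpp
      exact Sum.inr_injective (toLex.injective (finj hpp))
    · intro p
      exact hG (fmem _)
    · intro p p'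
      exact (Sum.Lex.inr_le_inr_iff).symm.trans (fiff _ _)
    · intro p
      refine Finset.ssubset_iff_subset_ne.2 ⟨(fiff _ _).1 (Sum.Lex.inl_le_inr _ p), ?_⟩
      intro heq
      exact absurd (finj heq) (lex_inl_ne_inr _ p)
  · -- saturation
    intro S hSG
    by_cases hSF : S ∈ F
    · -- `S ∈ F` but `S` not good: there is a copy of `P2` above `S` in `F`
      have hS : HasCopyAbove P2 F S := by
        by_contra hno
        exact hSG (mem_goodFam.2 ⟨hSF, hno⟩)
      exact key S hS
    · obtain ⟨f, hf, x, hx⟩ := copy_through hfree (hsat S hSF)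
      have hfmem : ∀ z : P1 ⊕ₗ P2, z ≠ x → f z ∈ F := by
        intro z hz
        refine (Finset.mem_insert.1 (hf.2.1 z)).resolve_left ?_
        intro hzT
        exact hz (hf.1 (hzT.trans hx.symm))
      rcases x with q₀ | p₀
      · -- `S` sits in the bottom part: it has a copy of `P2` above it in `F`
        refine key S ⟨fun p => f (toLex (Sum.inr p)), ⟨?_, ?_, ?_⟩, ?_⟩
        · intro p p' hpp
          exact Sum.inr_injective (toLex.injective (hf.1 hpp))
        · intro p
          exact hfmem _ (lex_inl_ne_inr q₀ p).symm
        · intro p p'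
          exact (Sum.Lex.inr_le_inr_iff).symm.trans (hf.2.2 _ _)
        · intro p
          refine Finset.ssubset_iff_subset_ne.2 ⟨?_, ?_⟩
          · rw [← hx]
            exact (hf.2.2 _ _).1 (Sum.Lex.inl_le_inr q₀ p)
          · rw [← hx]
            intro heq
            exact absurd (hf.1 heq) (lex_inl_ne_inr q₀ p)
      · -- `S` sits in the top part
        have hx' : f (toLex (Sum.inr p₀)) = S := hx
        have hcopy : IsInducedCopy F fun q => f (toLex (Sum.inl q)) := by
          refine ⟨fun q q' hqq => Sum.inl_injective (toLex.injective (hf.1 hqq)), ?_,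
            fun q q' => (Sum.Lex.inl_le_inl_iff).symm.trans (hf.2.2 _ _)⟩
          intro q
          exact hfmem _ (lex_inl_ne_inr q p₀)
        have hbelow : ∀ q, f (toLex (Sum.inl q)) ⊆
            Finset.univ.inf (fun p => f (toLex (Sum.inr p))) :=
          fun q => Finset.le_inf fun p _ => (hf.2.2 _ _).1 (Sum.Lex.inl_le_inr q p)
        obtain ⟨B, hBG, hBT⟩ := exists_good_below h2 hfree hsat _ ⟨_, hcopy, hbelow⟩
        -- the top part lands in `insert S (goodFam P2 F)`
        have htop : ∀ p, f (toLex (Sum.inr p)) ∈ insert S (goodFam P2 F) := by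
          intro p
          by_cases hp : (toLex (Sum.inr p) : P1 ⊕ₗ P2) = toLex (Sum.inr p₀)
          · rw [hp, hx']
            exact Finset.mem_insert_self _ _
          · refine Finset.mem_insert_of_mem (mem_goodFam.2 ⟨hfmem _ hp, ?_⟩)
            rintro ⟨g', hg', hab'⟩
            refine hfree (combine_copies hcopy hg' ?_)
            intro q p'
            exact lt_of_le_of_lt
              (Finset.le_iff_subset.2 ((hf.2.2 _ _).1 (Sum.Lex.inl_le_inr q p))) (hab' p')
        have hBle : ∀ p, B ⊆ f (toLex (Sum.inr p)) := by
          intro p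
          have h' : Finset.univ.inf (fun p => f (toLex (Sum.inr p))) ⊆
              f (toLex (Sum.inr p)) :=
            Finset.inf_le (f := fun p => f (toLex (Sum.inr p))) (Finset.mem_univ p)
          exact hBT.trans h'
        have hBlt : ∀ p, B ⊂ f (toLex (Sum.inr p)) := by
          intro p
          refine Finset.ssubset_iff_subset_ne.2 ⟨hBle p, ?_⟩
          obtain ⟨p₁, hp₁⟩ : ∃ p₁, ¬ p ≤ p₁ := not_forall.1 (h2 p)
          intro heq
          apply hp₁
          rw [← Sum.Lex.inr_le_inr_iff (α := P1)]
          refine (hf.2.2 _ _).2 ?_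
          rw [← heq]
          exact hBle p₁
        refine unit_copy_builder (Finset.mem_insert_of_mem hBG) ?_ htop ?_ hBlt
        · intro p p' hpp
          exact Sum.inr_injective (toLex.injective (hf.1 hpp))
        · intro p p'
          exact (Sum.Lex.inr_le_inr_iff).symm.trans (hf.2.2 _ _)

include h2 in
theorem satStar_unit_le (U : Type*) [PartialOrder U] [Subsingleton U] [Nonempty U] (n : ℕ) :
    satStar (U ⊕ₗ P2) n ≤ satStar (P1 ⊕ₗ P2) n := by
  haveI : Nonempty (P1 ⊕ₗ P2) := ⟨toLex (Sum.inl (Classical.arbitrary P1))⟩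
  have hne : {k : ℕ | ∃ 𝒜 : Finset (Finset (Fin n)),
      IsSaturatedFamily (P1 ⊕ₗ P2) 𝒜 ∧ 𝒜.card = k}.Nonempty := by
    obtain ⟨𝒜, h⟩ := exists_saturatedFamily (P1 ⊕ₗ P2) n
    exact ⟨𝒜.card, 𝒜, h, rfl⟩
  obtain ⟨F, hFsat, hFcard⟩ := Nat.sInf_mem hne
  obtain ⟨hfree, hsat⟩ := hFsat
  calc satStar (U ⊕ₗ P2) n ≤ (goodFam P2 F).card :=
        Nat.sInf_le ⟨goodFam P2 F, goodFam_saturated h2 hfree hsat U, rfl⟩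
    _ ≤ F.card := Finset.card_le_card (goodFam_subset F)
    _ = satStar (P1 ⊕ₗ P2) n := hFcard

end Core

end Statement3Aux

/-- If `P1`, `P2` are non-empty finite posets, `P1` has no greatest
element and `P2` has no least element, then
`sat*(n, P2 * P1) ≥ max { sat*(n, P2 * •), sat*(n, • * P1) }`. Here `P2 * P1` is encoded
as `P1 ⊕ₗ P2`, `P2 * •` (a new element below all of `P2`) as `Unit ⊕ₗ P2`, and `• * P1`
(a new element above all of `P1`) as `P1 ⊕ₗ Unit`. -/
theorem statement3 (P1 P2 : Type*) [PartialOrder P1] [Fintype P1] [Nonempty P1]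
    [PartialOrder P2] [Fintype P2] [Nonempty P2]
    (h1 : ¬ ∃ m : P1, IsTop m) (h2 : ¬ ∃ m : P2, IsBot m) (n : ℕ) :
    max (satStar (Unit ⊕ₗ P2) n) (satStar (P1 ⊕ₗ Unit) n) ≤ satStar (P1 ⊕ₗ P2) n := by
  push_neg at h1 h2
  refine max_le ?_ ?_
  · exact Statement3Aux.satStar_unit_le (P1 := P1) h2 Unit n
  · -- dualize
    have hd2 : ∀ m : P1ᵒᵈ, ¬ IsBot m := by
      intro m hm
      exact h1 (OrderDual.ofDual m) (by
        intro b
        exact hm (OrderDual.toDual b))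
    calc satStar (P1 ⊕ₗ Unit) n
        = satStar ((P1 ⊕ₗ Unit)ᵒᵈ) n := Statement3Aux.satStar_dual _ n
      _ = satStar (Unitᵒᵈ ⊕ₗ P1ᵒᵈ) n :=
          Statement3Aux.satStar_congr (OrderIso.sumLexDualAntidistrib P1 Unit) n
      _ ≤ satStar (P2ᵒᵈ ⊕ₗ P1ᵒᵈ) n :=
          Statement3Aux.satStar_unit_le (P1 := P2ᵒᵈ) hd2 Unitᵒᵈ n
      _ = satStar ((P1 ⊕ₗ P2)ᵒᵈ) n :=
          (Statement3Aux.satStar_congr (OrderIso.sumLexDualAntidistrib P1 P2) n).symm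
      _ = satStar (P1 ⊕ₗ P2) n := (Statement3Aux.satStar_dual _ n).symm
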